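/- arXiv:1805.05719 — 6 statements merged into one kernel-verified Lean document; each statement's English description precedes it below -/
import Mathlib

section
/- If a convex differentiable function F : ℝⁿ → ℝ with nonempty set of minimizers satisfies the flatness condition H1(γ) for some γ ≥ 1, then for every minimizer x* of F there exist M > 0 and η > 0 such that for all x with ‖x − x*‖ < η, F(x) − F* ≤ M‖x − x*‖^γ. -/
open InnerProductSpace

lemma inner_grad {n : ℕ} (F : EuclideanSpace ℝ (Fin n) → ℝ) (x y : EuclideanSpace ℝ (Fin n)) :
    (inner ℝ (gradient F x) y : ℝ) = fderiv ℝ F x y := by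
  rw [gradient, toDual_symm_apply]

/-- If a convex differentiable function `F : ℝⁿ → ℝ` with nonempty set of
minimizers satisfies `H1(γ)` for some `γ ≥ 1`, then for every minimizer `x*` there exist
`M > 0` and `η > 0` such that `F x − F* ≤ M ‖x − x*‖^γ` for all `x` with `‖x − x*‖ < η`. -/
theorem stmt1 {n : ℕ} (F : EuclideanSpace ℝ (Fin n) → ℝ)
    (hconv : ConvexOn ℝ Set.univ F) (hdiff : Differentiable ℝ F)
    (hmin : ∃ y, ∀ z, F y ≤ F z)
    (γ : ℝ) (hγ : 1 ≤ γ)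
    (hH1 : ∀ xs, (∀ z, F xs ≤ F z) → ∃ η > 0,
      ∀ x, ‖x - xs‖ < η → F x - F xs ≤ (1 / γ) * (inner ℝ (gradient F x) (x - xs) : ℝ)) :
    ∀ xs, (∀ z, F xs ≤ F z) → ∃ M > 0, ∃ η > 0,
      ∀ x, ‖x - xs‖ < η → F x - F xs ≤ M * ‖x - xs‖ ^ γ := by
  intro xs hxs
  obtain ⟨η, hη, hH⟩ := hH1 xs hxs
  have hγ0 : (0:ℝ) < γ := lt_of_lt_of_le one_pos hγ
  obtain ⟨c, -, hc⟩ := (isCompact_closedBall xs (η/2)).exists_isMaxOn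
    ⟨xs, Metric.mem_closedBall_self (by linarith)⟩ hdiff.continuous.continuousOn
  set C : ℝ := F c - F xs with hCdef
  have hC0 : 0 ≤ C := sub_nonneg.2 (hxs c)
  have hpow : (0:ℝ) < (2/η) ^ γ := Real.rpow_pos_of_pos (by positivity) γ
  refine ⟨(C + 1) * (2/η) ^ γ, by positivity, η/2, by positivity, ?_⟩
  intro x hx
  set r : ℝ := ‖x - xs‖ with hrdef
  have hr0 : 0 ≤ r := norm_nonneg _
  rcases eq_or_lt_of_le hr0 with hr | hr
  · -- r = 0, so x = xs
    have hxxs : x = xs := by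
      have : x - xs = 0 := norm_eq_zero.1 hr.symm
      simpa [sub_eq_zero] using this
    have h1 : F x - F xs = 0 := by rw [hxxs]; ring
    rw [h1]
    exact mul_nonneg (by positivity) (Real.rpow_nonneg hr0 γ)
  · -- main case
    set v : EuclideanSpace ℝ (Fin n) := (η/2/r) • (x - xs) with hvdef
    have hnv : ‖v‖ = η/2 := by
      rw [hvdef, norm_smul, Real.norm_eq_abs, abs_of_pos (by positivity), ← hrdef]
      field_simp
    set t₀ : ℝ := r / (η/2) with ht₀def
    have ht₀pos : 0 < t₀ := by positivity
    have ht₀le : t₀ ≤ 1 := by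
      rw [ht₀def, div_le_one (by positivity)]; linarith
    have hxeq : x = xs + t₀ • v := by
      rw [hvdef, ht₀def, smul_smul]
      have h1 : r / (η/2) * (η/2/r) = 1 := by field_simp
      rw [h1, one_smul]; abel
    set φ : ℝ → ℝ := fun t => F (xs + t • v) - F xs with hφdef
    have hφd : ∀ t : ℝ, HasDerivAt φ (fderiv ℝ F (xs + t • v) v) t := by
      intro t
      have hline : HasDerivAt (fun s : ℝ => xs + s • v) v t := by
        simpa using ((hasDerivAt_id t).smul_const v).const_add xs
      exact ((hdiff _).hasFDerivAt.comp_hasDerivAt t hline).sub_const (F xs)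
    have hkey : ∀ t ∈ Set.Ioc (0:ℝ) 1, γ * φ t ≤ t * fderiv ℝ F (xs + t • v) v := by
      intro t ht
      have hsub : (xs + t • v) - xs = t • v := by abel
      have hnorm : ‖(xs + t • v) - xs‖ < η := by
        rw [hsub, norm_smul, Real.norm_eq_abs, abs_of_pos ht.1, hnv]
        nlinarith [ht.1, ht.2]
      have hh := hH (xs + t • v) hnorm
      rw [hsub, inner_grad, map_smul] at hh
      have hh' : φ t ≤ (1/γ) * (t * fderiv ℝ F (xs + t • v) v) := by
        simpa [hφdef, smul_eq_mul] using hh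
      calc γ * φ t ≤ γ * ((1/γ) * (t * fderiv ℝ F (xs + t • v) v)) :=
            mul_le_mul_of_nonneg_left hh' hγ0.le
        _ = t * fderiv ℝ F (xs + t • v) v := by field_simp
    set k : ℝ → ℝ := fun t => φ t * t ^ (-γ) with hkdef
    have hkd : ∀ t ∈ Set.Ioc (0:ℝ) 1, HasDerivAt k
        (fderiv ℝ F (xs + t • v) v * t ^ (-γ) + φ t * (-γ * t ^ (-γ - 1))) t := by
      intro t ht
      exact (hφd t).mul (Real.hasDerivAt_rpow_const (Or.inl ht.1.ne'))
    have hmono : MonotoneOn k (Set.Icc t₀ 1) := by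
      have hsub : Set.Icc t₀ 1 ⊆ Set.Ioc (0:ℝ) 1 := fun s hs => ⟨lt_of_lt_of_le ht₀pos hs.1, hs.2⟩
      apply monotoneOn_of_deriv_nonneg (convex_Icc t₀ 1)
      · exact ContinuousOn.mono (fun s hs => ((hkd s hs).continuousAt).continuousWithinAt) hsub
      · intro s hs
        rw [interior_Icc] at hs
        exact (hkd s (hsub (Set.mem_Icc_of_Ioo hs))).differentiableAt.differentiableWithinAt
      · intro s hs
        rw [interior_Icc] at hs
        have hsmem : s ∈ Set.Ioc (0:ℝ) 1 := hsub (Set.mem_Icc_of_Ioo hs)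
        rw [(hkd s hsmem).deriv]
        have hs0 : 0 < s := hsmem.1
        have hrp : s ^ (-γ) = s * s ^ (-γ - 1) := by
          have h2 := Real.rpow_add hs0 1 (-γ - 1)
          rw [Real.rpow_one, show (1:ℝ) + (-γ - 1) = -γ from by ring] at h2
          exact h2
        have hp : 0 ≤ s ^ (-γ - 1) := Real.rpow_nonneg hs0.le _
        have hb := mul_nonneg (sub_nonneg.2 (hkey s hsmem)) hp
        rw [hrp]
        nlinarith [hb]
    have hmem₀ : t₀ ∈ Set.Icc t₀ 1 := ⟨le_refl t₀, ht₀le⟩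
    have hmem₁ : (1:ℝ) ∈ Set.Icc t₀ 1 := ⟨ht₀le, le_refl 1⟩
    have hk : k t₀ ≤ k 1 := hmono hmem₀ hmem₁ ht₀le
    have hk1 : k 1 = φ 1 := by simp [hkdef, Real.one_rpow]
    have hφ1 : φ 1 ≤ C := by
      have hball : xs + (1:ℝ) • v ∈ Metric.closedBall xs (η/2) := by
        rw [Metric.mem_closedBall, dist_eq_norm]
        have : xs + (1:ℝ) • v - xs = v := by rw [one_smul]; abel
        rw [this, hnv]
      have := hc hball
      simp only [Set.mem_setOf_eq] at this
      simp only [hφdef, hCdef]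
      linarith
    have hcancel : φ t₀ = k t₀ * t₀ ^ γ := by
      rw [hkdef]
      have : t₀ ^ (-γ) * t₀ ^ γ = 1 := by
        rw [← Real.rpow_add ht₀pos, neg_add_cancel, Real.rpow_zero]
      rw [mul_assoc, this, mul_one]
    have hφt₀ : φ t₀ ≤ C * t₀ ^ γ := by
      rw [hcancel]
      have hpos : 0 ≤ t₀ ^ γ := Real.rpow_nonneg ht₀pos.le γ
      calc k t₀ * t₀ ^ γ ≤ φ 1 * t₀ ^ γ := by
            apply mul_le_mul_of_nonneg_right _ hpos
            rw [← hk1]; exact hk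
        _ ≤ C * t₀ ^ γ := mul_le_mul_of_nonneg_right hφ1 hpos
    have ht₀eq : t₀ ^ γ = r ^ γ * (2/η) ^ γ := by
      rw [← Real.mul_rpow hr0 (by positivity)]
      congr 1
      rw [ht₀def]; field_simp
    have hFx : F x - F xs = φ t₀ := by rw [hxeq]
    rw [hFx]
    have hrγ : 0 ≤ r ^ γ := Real.rpow_nonneg hr0 γ
    calc φ t₀ ≤ C * t₀ ^ γ := hφt₀
      _ = C * ((2/η) ^ γ) * r ^ γ := by rw [ht₀eq]; ring
      _ ≤ (C + 1) * (2/η) ^ γ * r ^ γ := by nlinarith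
end

section
/- Let g : ℝ → ℝ be a convex differentiable function with g(0) = 0 and 0 ∈ argmin g, and let γ ≥ 1. If g(t) ≤ (t/γ)·g'(t) for all t ∈ [0,1], then the function t ↦ t^(−γ) g(t) is monotonically increasing on (0,1] and g(t) ≤ g(1)·t^γ for all t ∈ [0,1]. -/
/-- Let `g : ℝ → ℝ` be a convex differentiable function with `g 0 = 0` and
`0 ∈ argmin g`, and let `γ ≥ 1`. If `g t ≤ (t/γ) g'(t)` for all `t ∈ [0,1]`, then
`t ↦ t^(−γ) g t` is monotonically increasing on `(0,1]` and `g t ≤ g 1 · t^γ` on `[0,1]`. -/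
theorem stmt2 (g : ℝ → ℝ) (g' : ℝ → ℝ)
    (hconv : ConvexOn ℝ Set.univ g) (hdiff : ∀ t, HasDerivAt g (g' t) t)
    (hg0 : g 0 = 0) (hmin : ∀ t, g 0 ≤ g t)
    (γ : ℝ) (hγ : 1 ≤ γ)
    (hineq : ∀ t ∈ Set.Icc (0 : ℝ) 1, g t ≤ (t / γ) * g' t) :
    MonotoneOn (fun t : ℝ => t ^ (-γ) * g t) (Set.Ioc 0 1) ∧
      ∀ t ∈ Set.Icc (0 : ℝ) 1, g t ≤ g 1 * t ^ γ := by
  have hγ0 : (0 : ℝ) < γ := lt_of_lt_of_le one_pos hγ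
  have hgcont : Continuous g := by
    have : Differentiable ℝ g := fun t => (hdiff t).differentiableAt
    exact this.continuous
  -- derivative of f at x ∈ Ioo 0 1
  have hderiv : ∀ x ∈ Set.Ioo (0:ℝ) 1,
      HasDerivAt (fun t : ℝ => t ^ (-γ) * g t)
        ((-γ * x ^ (-γ - 1)) * g x + x ^ (-γ) * g' x) x := by
    intro x hx
    have hx0 : x ≠ 0 := ne_of_gt hx.1
    have h1 : HasDerivAt (fun t : ℝ => t ^ (-γ)) (-γ * x ^ (-γ - 1)) x :=
      Real.hasDerivAt_rpow_const (Or.inl hx0)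
    exact h1.mul (hdiff x)
  have hmono : MonotoneOn (fun t : ℝ => t ^ (-γ) * g t) (Set.Ioc 0 1) := by
    have hconvset : Convex ℝ (Set.Ioc (0:ℝ) 1) := convex_Ioc 0 1
    have hint : interior (Set.Ioc (0:ℝ) 1) = Set.Ioo 0 1 := interior_Ioc
    apply monotoneOn_of_deriv_nonneg hconvset
    · apply ContinuousOn.mul _ hgcont.continuousOn
      intro x hx
      exact (Real.continuousAt_rpow_const x (-γ) (Or.inl (ne_of_gt hx.1))).continuousWithinAt
    · rw [hint]
      intro x hx
      exact (hderiv x hx).differentiableAt.differentiableWithinAt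
    · rw [hint]
      intro x hx
      rw [(hderiv x hx).deriv]
      have hx0 : (0:ℝ) < x := hx.1
      have hkey : γ * g x ≤ x * g' x := by
        have := hineq x ⟨le_of_lt hx0, le_of_lt hx.2⟩
        have h2 : γ * g x ≤ γ * ((x / γ) * g' x) := by
          exact mul_le_mul_of_nonneg_left this (le_of_lt hγ0)
        calc γ * g x ≤ γ * ((x / γ) * g' x) := h2
          _ = x * g' x := by field_simp
      have hpow : x ^ (-γ) = x ^ (-γ - 1) * x := by
        rw [← Real.rpow_add_one (ne_of_gt hx0)]
        ring_nf
      have hpow1 : (0:ℝ) ≤ x ^ (-γ - 1) := Real.rpow_nonneg (le_of_lt hx0) _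
      calc (0:ℝ) ≤ x ^ (-γ - 1) * (x * g' x - γ * g x) :=
            mul_nonneg hpow1 (by linarith)
        _ = -γ * x ^ (-γ - 1) * g x + x ^ (-γ) * g' x := by rw [hpow]; ring
  refine ⟨hmono, ?_⟩
  intro t ht
  rcases eq_or_lt_of_le ht.1 with h0 | h0
  · rw [← h0, hg0, Real.zero_rpow (ne_of_gt hγ0), mul_zero]
  · have h1 : t ^ (-γ) * g t ≤ 1 ^ (-γ) * g 1 :=
      hmono ⟨h0, ht.2⟩ ⟨one_pos, le_refl 1⟩ ht.2
    rw [Real.one_rpow, one_mul] at h1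
    have htγ : (0:ℝ) < t ^ γ := Real.rpow_pos_of_pos h0 γ
    have h2 : t ^ γ * (t ^ (-γ) * g t) ≤ t ^ γ * g 1 :=
      mul_le_mul_of_nonneg_left h1 (le_of_lt htγ)
    have h3 : t ^ γ * t ^ (-γ) = 1 := by
      rw [← Real.rpow_add h0]; simp
    calc g t = t ^ γ * t ^ (-γ) * g t := by rw [h3, one_mul]
      _ = t ^ γ * (t ^ (-γ) * g t) := by ring
      _ ≤ t ^ γ * g 1 := h2
      _ = g 1 * t ^ γ := mul_comm _ _
end

section
/- Let F : ℝⁿ → ℝ be a convex differentiable function satisfying the growth condition H2(r) for some r ≥ 1, and assume the set X* = argmin F is compact. Then there exist K > 0 and ε > 0 such that for every x ∈ ℝⁿ with d(x, X*) ≤ ε one has K·d(x, X*)^r ≤ F(x) − F*. -/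
/-- Let `F : ℝⁿ → ℝ` be a convex differentiable function satisfying the growth
condition `H2(r)` for some `r ≥ 1`, and assume `X* = argmin F` is (nonempty and) compact.
Then there exist `K > 0` and `ε > 0` such that for every `x` with `d(x, X*) ≤ ε`,
`K · d(x, X*)^r ≤ F x − F*`. -/
theorem stmt3 {n : ℕ} (F : EuclideanSpace ℝ (Fin n) → ℝ)
    (hconv : ConvexOn ℝ Set.univ F) (hdiff : Differentiable ℝ F)
    (xstar : EuclideanSpace ℝ (Fin n)) (hxstar : ∀ z, F xstar ≤ F z)
    (hcpt : IsCompact {y : EuclideanSpace ℝ (Fin n) | ∀ z, F y ≤ F z})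
    (r : ℝ) (hr : 1 ≤ r)
    (hH2 : ∀ xs, (∀ z, F xs ≤ F z) → ∃ K > 0, ∃ ε > 0,
      ∀ x, ‖x - xs‖ < ε →
        K * Metric.infDist x {y : EuclideanSpace ℝ (Fin n) | ∀ z, F y ≤ F z} ^ r
          ≤ F x - F xs) :
    ∃ K > 0, ∃ ε > 0, ∀ x : EuclideanSpace ℝ (Fin n),
      Metric.infDist x {y : EuclideanSpace ℝ (Fin n) | ∀ z, F y ≤ F z} ≤ ε →
        K * Metric.infDist x {y : EuclideanSpace ℝ (Fin n) | ∀ z, F y ≤ F z} ^ r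
          ≤ F x - F xstar := by
  set S := {y : EuclideanSpace ℝ (Fin n) | ∀ z, F y ≤ F z} with hS
  have hSne : S.Nonempty := ⟨xstar, hxstar⟩
  choose K hK ε hε hbound using fun s : S => hH2 s.1 s.2
  have hcover : S ⊆ ⋃ s : S, Metric.ball (s : EuclideanSpace ℝ (Fin n)) (ε s / 2) := by
    intro y hy
    exact Set.mem_iUnion.2 ⟨⟨y, hy⟩, Metric.mem_ball_self (by linarith [hε ⟨y, hy⟩])⟩
  obtain ⟨t, ht⟩ := hcpt.elim_finite_subcover _ (fun s => Metric.isOpen_ball) hcover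
  have htne : t.Nonempty := by
    obtain ⟨s, hst, -⟩ := Set.mem_iUnion₂.1 (ht hxstar)
    exact ⟨s, hst⟩
  set K0 := t.inf' htne K with hK0
  set ε0 := t.inf' htne ε with hε0
  have hK0pos : 0 < K0 := (Finset.lt_inf'_iff htne).2 fun s _ => hK s
  have hε0pos : 0 < ε0 := (Finset.lt_inf'_iff htne).2 fun s _ => hε s
  refine ⟨K0, hK0pos, ε0 / 4, by linarith, fun x hx => ?_⟩
  obtain ⟨y, hy, hxy⟩ := hcpt.exists_infDist_eq_dist hSne x
  obtain ⟨s, hst, hys⟩ := Set.mem_iUnion₂.1 (ht hy)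
  have hεs : ε0 ≤ ε s := Finset.inf'_le _ hst
  have hKs : K0 ≤ K s := Finset.inf'_le _ hst
  have hdist : ‖x - (s : EuclideanSpace ℝ (Fin n))‖ < ε s := by
    have h1 : dist x (s : EuclideanSpace ℝ (Fin n)) ≤ dist x y + dist y s :=
      dist_triangle _ _ _
    have h2 : dist y (s : EuclideanSpace ℝ (Fin n)) < ε s / 2 := hys
    rw [← dist_eq_norm]
    calc dist x (s : EuclideanSpace ℝ (Fin n)) ≤ dist x y + dist y s := h1
      _ < ε0 / 4 + ε s / 2 := by rw [← hxy]; linarith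
      _ ≤ ε s := by linarith
  have hb := hbound s x hdist
  have hFs : F (s : EuclideanSpace ℝ (Fin n)) = F xstar :=
    le_antisymm (s.2 xstar) (hxstar _)
  have hnn : (0:ℝ) ≤ Metric.infDist x S ^ r :=
    Real.rpow_nonneg Metric.infDist_nonneg r
  calc K0 * Metric.infDist x S ^ r ≤ K s * Metric.infDist x S ^ r :=
        mul_le_mul_of_nonneg_right hKs hnn
    _ ≤ F x - F (s : EuclideanSpace ℝ (Fin n)) := hb
    _ = F x - F xstar := by rw [hFs]
end

section
/- Let y : [T₀, ∞) → ℝ be a continuously differentiable function. If y is bounded, then for every T > max(T₀, 0) and every ε > 0 there exists t₁ > T such that |y'(t₁)| ≤ ε/t₁. -/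
/-- Auxiliary: if `f' t > ε / t` on `[s, ∞)` with `s > 0`, then `f` is unbounded. -/
lemma stmt13_aux (s ε M : ℝ) (hs : 0 < s) (hε : 0 < ε) (f f' : ℝ → ℝ)
    (hf : ∀ t ∈ Set.Ici s, HasDerivAt f (f' t) t)
    (hder : ∀ t ∈ Set.Ici s, ε / t < f' t)
    (hb : ∀ t ∈ Set.Ici s, |f t| ≤ M) : False := by
  set g : ℝ → ℝ := fun t => f t - ε * Real.log t with hgdef
  have hg : ∀ t ∈ Set.Ici s, HasDerivAt g (f' t - ε / t) t := by
    intro t ht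
    have ht0 : (0:ℝ) < t := lt_of_lt_of_le hs ht
    have := (hf t ht).sub ((Real.hasDerivAt_log (ne_of_gt ht0)).const_mul ε)
    rw [div_eq_mul_inv]
    exact this
  have hmono : StrictMonoOn g (Set.Ici s) := by
    apply strictMonoOn_of_deriv_pos (convex_Ici s)
    · exact fun t ht => ((hg t ht).differentiableAt).continuousAt.continuousWithinAt
    · intro x hx
      rw [interior_Ici] at hx
      have hx' : x ∈ Set.Ici s := Set.mem_Ici.mpr (le_of_lt hx)
      rw [(hg x hx').deriv]
      have := hder x hx'
      linarith
  have hsmem : s ∈ Set.Ici s := Set.mem_Ici.mpr le_rfl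
  have hM : 0 ≤ M := le_trans (abs_nonneg _) (hb s hsmem)
  set t : ℝ := s * Real.exp ((2 * M + 1) / ε) with htdef
  have hexp : (1:ℝ) < Real.exp ((2 * M + 1) / ε) := by
    rw [show (1:ℝ) = Real.exp 0 by simp]
    exact Real.exp_lt_exp.mpr (by positivity)
  have hst : s < t := by
    have := mul_lt_mul_of_pos_left hexp hs
    simpa [htdef] using this
  have hlog : Real.log t = Real.log s + (2 * M + 1) / ε := by
    rw [htdef, Real.log_mul (ne_of_gt hs) (Real.exp_ne_zero _), Real.log_exp]
  have htmem : t ∈ Set.Ici s := Set.mem_Ici.mpr (le_of_lt hst)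
  have hgs : g s < g t := hmono hsmem htmem hst
  have h1 : |f s| ≤ M := hb s hsmem
  have h2 : |f t| ≤ M := hb t htmem
  have h1' := abs_le.mp h1
  have h2' := abs_le.mp h2
  have hε' : ε * ((2 * M + 1) / ε) = 2 * M + 1 := by field_simp
  simp only [hgdef, hlog] at hgs
  nlinarith [hgs, h1'.1, h2'.2]

/-- Let `y : [T₀, ∞) → ℝ` be continuously differentiable and bounded.
Then for every `T > max(T₀, 0)` and every `ε > 0` there exists `t₁ > T` such that
`|y'(t₁)| ≤ ε / t₁`. -/
theorem stmt13 (T₀ : ℝ) (y y' : ℝ → ℝ)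
    (hy : ∀ t ∈ Set.Ici T₀, HasDerivAt y (y' t) t)
    (hy' : ContinuousOn y' (Set.Ici T₀))
    (hbdd : ∃ M, ∀ t ∈ Set.Ici T₀, |y t| ≤ M) :
    ∀ T > max T₀ 0, ∀ ε > 0, ∃ t₁ > T, |y' t₁| ≤ ε / t₁ := by
  intro T hT ε hε
  by_contra hcon
  push_neg at hcon
  have hT0 : T₀ < T := lt_of_le_of_lt (le_max_left _ _) hT
  have hTpos : (0:ℝ) < T := lt_of_le_of_lt (le_max_right _ _) hT
  obtain ⟨M, hM⟩ := hbdd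
  set s : ℝ := T + 1 with hsdef
  have hsT : T < s := by simp [hsdef]
  have hspos : 0 < s := by linarith
  have hsub : Set.Ici s ⊆ Set.Ici T₀ := fun t ht => Set.mem_Ici.mpr (le_trans (by linarith : T₀ ≤ s) (Set.mem_Ici.mp ht))
  -- y' does not vanish on (T, ∞)
  have hnz : ∀ t, T < t → y' t ≠ 0 := by
    intro t ht h0
    have := hcon t ht
    rw [h0, abs_zero] at this
    have : (0:ℝ) < ε / t := div_pos hε (by linarith)
    linarith
  rcases lt_or_gt_of_ne (hnz s hsT) with hneg | hpos
  · -- y' s < 0 : y' < 0 on [s, ∞)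
    have hsign : ∀ t ∈ Set.Ici s, y' t < 0 := by
      intro t ht
      by_contra hle
      push_neg at hle
      have hTt : T < t := lt_of_lt_of_le hsT ht
      have htpos : 0 < y' t := lt_of_le_of_ne hle (Ne.symm (hnz t hTt))
      have hcont : ContinuousOn y' (Set.Icc s t) :=
        hy'.mono (fun x hx => le_trans (by linarith) hx.1)
      have : (0:ℝ) ∈ Set.Icc (y' s) (y' t) := ⟨le_of_lt hneg, le_of_lt htpos⟩
      obtain ⟨c, hc, hc0⟩ := intermediate_value_Icc ht hcont this
      exact hnz c (lt_of_lt_of_le hsT hc.1) hc0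
    refine stmt13_aux s ε M hspos hε (fun t => -y t) (fun t => -(y' t)) ?_ ?_ ?_
    · exact fun t ht => (hy t (hsub ht)).neg
    · intro t ht
      have h1 := hcon t (lt_of_lt_of_le hsT ht)
      rwa [abs_of_neg (hsign t ht)] at h1
    · intro t ht
      rw [abs_neg]; exact hM t (hsub ht)
  · -- y' s > 0 : y' > 0 on [s, ∞)
    have hsign : ∀ t ∈ Set.Ici s, 0 < y' t := by
      intro t ht
      by_contra hle
      push_neg at hle
      have hTt : T < t := lt_of_lt_of_le hsT ht
      have htneg : y' t < 0 := lt_of_le_of_ne hle (hnz t hTt)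
      have hcont : ContinuousOn y' (Set.Icc s t) :=
        hy'.mono (fun x hx => le_trans (by linarith) hx.1)
      have : (0:ℝ) ∈ Set.Icc (y' t) (y' s) := ⟨le_of_lt htneg, le_of_lt hpos⟩
      obtain ⟨c, hc, hc0⟩ := intermediate_value_Icc' ht hcont this
      exact hnz c (lt_of_lt_of_le hsT hc.1) hc0
    refine stmt13_aux s ε M hspos hε y y' ?_ ?_ ?_
    · exact fun t ht => hy t (hsub ht)
    · intro t ht
      have h1 := hcon t (lt_of_lt_of_le hsT ht)
      rwa [abs_of_pos (hsign t ht)] at h1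
    · exact fun t ht => hM t (hsub ht)
end

section
/- Let x be a twice continuously differentiable solution on [t₀, ∞) of the ODE x''(t) + (α/t)x'(t) + ∇F(x(t)) = 0, let x* be a minimizer of F, let λ, ξ be real numbers, and define a(t) = t(F(x(t)) − F*), b(t) = (1/(2t))‖λ(x(t) − x*) + t x'(t)‖², c(t) = (1/(2t))‖x(t) − x*‖², and E(t) = t²(F(x(t)) − F*) + (1/2)‖λ(x(t) − x*) + t x'(t)‖² + (ξ/2)‖x(t) − x*‖². Then for all t ≥ t₀: E'(t) = 2a(t) + λt⟨−∇F(x(t)), x(t) − x*⟩ + (ξ − λ(λ + 1 − α))⟨x'(t), x(t) − x*⟩ + 2(λ + 1 − α)b(t) − 2λ²(λ + 1 − α)c(t). -/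
open RealInnerProductSpace

/-- Derivative of the Lyapunov energy
`E(t) = t²(F(x t) − F*) + ½‖λ(x t − x*) + t x' t‖² + (ξ/2)‖x t − x*‖²` along a solution
of `x'' + (α/t) x' + ∇F(x) = 0`:
`E'(t) = 2a(t) + λt⟨−∇F(x t), x t − x*⟩ + (ξ − λ(λ+1−α))⟨x' t, x t − x*⟩
        + 2(λ+1−α) b(t) − 2λ²(λ+1−α) c(t)`. -/
theorem stmt14 {n : ℕ} (F : EuclideanSpace ℝ (Fin n) → ℝ)
    (hconv : ConvexOn ℝ Set.univ F) (hdiff : Differentiable ℝ F)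
    (α t₀ : ℝ) (hα : 0 < α) (ht₀ : 0 < t₀)
    (x x' x'' : ℝ → EuclideanSpace ℝ (Fin n))
    (hx : ∀ t ∈ Set.Ici t₀, HasDerivAt x (x' t) t)
    (hx' : ∀ t ∈ Set.Ici t₀, HasDerivAt x' (x'' t) t)
    (hx'' : ContinuousOn x'' (Set.Ici t₀))
    (hode : ∀ t ∈ Set.Ici t₀, x'' t + (α / t) • x' t + gradient F (x t) = 0)
    (xstar : EuclideanSpace ℝ (Fin n)) (hxstar : ∀ z, F xstar ≤ F z)
    (lam ξ : ℝ) :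
    ∀ t ∈ Set.Ici t₀,
      HasDerivAt (fun s : ℝ => s ^ 2 * (F (x s) - F xstar)
          + (1 / 2) * ‖lam • (x s - xstar) + s • x' s‖ ^ 2
          + (ξ / 2) * ‖x s - xstar‖ ^ 2)
        (2 * (t * (F (x t) - F xstar))
          + lam * t * (inner ℝ (-(gradient F (x t))) (x t - xstar) : ℝ)
          + (ξ - lam * (lam + 1 - α)) * (inner ℝ (x' t) (x t - xstar) : ℝ)
          + 2 * (lam + 1 - α) * ((1 / (2 * t)) * ‖lam • (x t - xstar) + t • x' t‖ ^ 2)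
          - 2 * lam ^ 2 * (lam + 1 - α) * ((1 / (2 * t)) * ‖x t - xstar‖ ^ 2)) t := by
  intro t ht
  have ht0 : (0 : ℝ) < t := lt_of_lt_of_le ht₀ ht
  have htne : t ≠ 0 := ne_of_gt ht0
  set g := gradient F (x t) with hg
  have hxd := hx t ht
  have hxd' := hx' t ht
  -- derivative of F ∘ x
  have hFd : HasDerivAt (fun s => F (x s)) (inner ℝ g (x' t) : ℝ) t := by
    have h1 := ((hdiff (x t)).hasGradientAt.hasFDerivAt).comp_hasDerivAt t hxd
    have h2 : (inner ℝ g (x' t) : ℝ)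
        = InnerProductSpace.toDual ℝ (EuclideanSpace ℝ (Fin n)) (gradient F (x t)) (x' t) := by
      simp [hg, InnerProductSpace.toDual_apply_apply]
    rw [h2]; exact h1
  have hud : HasDerivAt (fun s => x s - xstar) (x' t) t := hxd.sub_const xstar
  have hvd : HasDerivAt (fun s => lam • (x s - xstar) + s • x' s)
      (lam • x' t + (t • x'' t + (1 : ℝ) • x' t)) t :=
    (hud.const_smul lam).add ((hasDerivAt_id t).smul hxd')
  have hA : HasDerivAt (fun s => s ^ 2 * (F (x s) - F xstar))
      (2 * t ^ 1 * (F (x t) - F xstar) + t ^ 2 * (inner ℝ g (x' t) : ℝ)) t :=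
    (hasDerivAt_pow 2 t).mul (hFd.sub_const (F xstar))
  set v := fun s : ℝ => lam • (x s - xstar) + s • x' s with hv
  set v' := lam • x' t + (t • x'' t + (1 : ℝ) • x' t) with hv'
  have hB : HasDerivAt (fun s => (inner ℝ (v s) (v s) : ℝ))
      ((inner ℝ (v t) v' : ℝ) + (inner ℝ v' (v t) : ℝ)) t := hvd.inner ℝ hvd
  have hC : HasDerivAt (fun s => (inner ℝ (x s - xstar) (x s - xstar) : ℝ))
      ((inner ℝ (x t - xstar) (x' t) : ℝ) + (inner ℝ (x' t) (x t - xstar) : ℝ)) t :=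
    hud.inner ℝ hud
  have hE := (hA.add (hB.const_mul ((1 : ℝ) / 2))).add (hC.const_mul (ξ / 2))
  have hfun : (fun s : ℝ => s ^ 2 * (F (x s) - F xstar)
          + (1 / 2) * ‖lam • (x s - xstar) + s • x' s‖ ^ 2
          + (ξ / 2) * ‖x s - xstar‖ ^ 2)
      = fun s : ℝ => s ^ 2 * (F (x s) - F xstar)
          + (1 / 2) * (inner ℝ (v s) (v s) : ℝ)
          + (ξ / 2) * (inner ℝ (x s - xstar) (x s - xstar) : ℝ) := by
    funext s
    rw [real_inner_self_eq_norm_sq, real_inner_self_eq_norm_sq]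
  rw [hfun]
  convert hE using 1
  case e'_4 => rfl
  case e'_5 => rfl
  case e'_8 => rfl
  -- substitute the ODE
  have hxx : x'' t = -((α / t) • x' t) - g := by
    have h := hode t ht
    rw [add_assoc] at h
    have := eq_neg_of_add_eq_zero_left h
    rw [this]; abel
  rw [hv', hxx]
  rw [← real_inner_self_eq_norm_sq, ← real_inner_self_eq_norm_sq]
  simp only [hv, inner_add_left, inner_add_right, inner_sub_left, inner_sub_right,
    real_inner_smul_left, real_inner_smul_right, inner_neg_left, inner_neg_right,
    one_smul, smul_smul, smul_sub, smul_add, neg_smul, inner_smul_left, inner_smul_right,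
    conj_trivial]
  simp only [real_inner_comm (x' t) (x t), real_inner_comm (x' t) xstar,
    real_inner_comm (x t) g, real_inner_comm xstar g, real_inner_comm (x' t) g,
    real_inner_comm xstar (x t)]
  set P1 := (inner ℝ g (x' t) : ℝ)
  set P2 := (inner ℝ g (x t) : ℝ)
  set P3 := (inner ℝ g xstar : ℝ)
  set P4 := (inner ℝ (x t) (x' t) : ℝ)
  set P5 := (inner ℝ xstar (x' t) : ℝ)
  set P6 := (inner ℝ (x' t) (x' t) : ℝ)
  set P7 := (inner ℝ (x t) (x t) : ℝ)
  set P8 := (inner ℝ xstar xstar : ℝ)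
  set P9 := (inner ℝ (x t) xstar : ℝ)
  field_simp
  ring
end

section
/- Let γ > 1, α > 0, λ, p ∈ ℝ, and let F(y) = |y|^γ on ℝ, whose minimum value is F* = 0 attained at x* = 0. Let x be a twice continuously differentiable solution on [t₀, ∞) of x''(t) + (α/t)x'(t) + F'(x(t)) = 0. Set ξ = λ(λ + 1 − α), a(t) = t·F(x(t)), b(t) = (1/(2t))|λ x(t) + t x'(t)|², c(t) = (1/(2t))|x(t)|², E(t) = t²F(x(t)) + (1/2)|λ x(t) + t x'(t)|² + (ξ/2)|x(t)|², and H(t) = t^p E(t). Then for all t ≥ t₀: H'(t) = t^p[(2 + p)a(t) + λt·(−F'(x(t)))·x(t) + (2λ + 2 − 2α + p)b(t) + λ(λ + 1 − α)(−2λ + p)c(t)]. -/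
/-- For `F y = |y|^γ` (`γ > 1`, minimum `F* = 0` at `x* = 0`), along a
solution of `x'' + (α/t) x' + F'(x) = 0`, with `ξ = λ(λ+1−α)` and `H(t) = t^p E(t)`,
one has the exact identity
`H'(t) = t^p[(2+p) a(t) + λ t (−F'(x t)) x t + (2λ+2−2α+p) b(t) + λ(λ+1−α)(−2λ+p) c(t)]`. -/
theorem stmt17 (γ α t₀ : ℝ) (hγ : 1 < γ) (hα : 0 < α) (ht₀ : 0 < t₀)
    (lam p : ℝ)
    (x x' x'' : ℝ → ℝ)
    (hx : ∀ t ∈ Set.Ici t₀, HasDerivAt x (x' t) t)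
    (hx' : ∀ t ∈ Set.Ici t₀, HasDerivAt x' (x'' t) t)
    (hx'' : ContinuousOn x'' (Set.Ici t₀))
    (hode : ∀ t ∈ Set.Ici t₀, x'' t + (α / t) * x' t + γ * |x t| ^ (γ - 2) * x t = 0) :
    ∀ t ∈ Set.Ici t₀,
      HasDerivAt (fun s : ℝ => s ^ p * (s ^ 2 * |x s| ^ γ
          + (1 / 2) * |lam * x s + s * x' s| ^ 2
          + (lam * (lam + 1 - α) / 2) * |x s| ^ 2))
        (t ^ p * ((2 + p) * (t * |x t| ^ γ)
          + lam * t * (-(γ * |x t| ^ (γ - 2) * x t)) * x t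
          + (2 * lam + 2 - 2 * α + p) * ((1 / (2 * t)) * |lam * x t + t * x' t| ^ 2)
          + lam * (lam + 1 - α) * (-(2 * lam) + p) * ((1 / (2 * t)) * |x t| ^ 2))) t := by
  intro t ht
  have htpos : 0 < t := lt_of_lt_of_le ht₀ ht
  have htne : t ≠ 0 := htpos.ne'
  have hxd := hx t ht
  have hx'd := hx' t ht
  -- remove absolute values from squares
  simp only [sq_abs]
  -- derivative of |x s|^γ
  have hF : HasDerivAt (fun s : ℝ => |x s| ^ γ)
      ((γ * |x t| ^ (γ - 2) * x t) * x' t) t :=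
    (hasDerivAt_abs_rpow (x t) hγ).comp t hxd
  -- derivative of s^p
  have hP : HasDerivAt (fun s : ℝ => s ^ p) (p * t ^ (p - 1)) t :=
    Real.hasDerivAt_rpow_const (Or.inl htne)
  -- derivative of inner E
  have hE : HasDerivAt (fun s : ℝ => s ^ 2 * |x s| ^ γ
      + (1 / 2) * (lam * x s + s * x' s) ^ 2
      + (lam * (lam + 1 - α) / 2) * (x s) ^ 2)
      (((2 : ℝ) * t ^ 1 * |x t| ^ γ + t ^ 2 * ((γ * |x t| ^ (γ - 2) * x t) * x' t))
        + (1 / 2) * ((2 : ℝ) * (lam * x t + t * x' t) ^ 1 * (lam * x' t + (1 * x' t + t * x'' t)))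
        + (lam * (lam + 1 - α) / 2) * ((2 : ℝ) * (x t) ^ 1 * x' t)) t := by
    have h1 : HasDerivAt (fun s : ℝ => s ^ 2 * |x s| ^ γ)
        ((2 : ℝ) * t ^ 1 * |x t| ^ γ + t ^ 2 * ((γ * |x t| ^ (γ - 2) * x t) * x' t)) t := by
      have := ((hasDerivAt_pow 2 t).mul hF)
      refine this.congr_deriv ?_
      norm_num
    have hlin : HasDerivAt (fun s : ℝ => lam * x s + s * x' s)
        (lam * x' t + (1 * x' t + t * x'' t)) t :=
      ((hxd.const_mul lam).add ((hasDerivAt_id t).mul hx'd))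
    have h2 : HasDerivAt (fun s : ℝ => (1 / 2) * (lam * x s + s * x' s) ^ 2)
        ((1 / 2) * ((2 : ℝ) * (lam * x t + t * x' t) ^ 1 * (lam * x' t + (1 * x' t + t * x'' t)))) t := by
      have := (hlin.pow 2).const_mul (1 / 2 : ℝ)
      refine this.congr_deriv ?_
      norm_num
    have h3 : HasDerivAt (fun s : ℝ => (lam * (lam + 1 - α) / 2) * (x s) ^ 2)
        ((lam * (lam + 1 - α) / 2) * ((2 : ℝ) * (x t) ^ 1 * x' t)) t := by
      have := (hxd.pow 2).const_mul (lam * (lam + 1 - α) / 2 : ℝ)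
      refine this.congr_deriv ?_
      norm_num
    exact (h1.add h2).add h3
  have H := hP.mul hE
  refine H.congr_deriv ?_
  have hode' : x'' t = -(α / t * x' t) - γ * |x t| ^ (γ - 2) * x t := by
    have := hode t ht; linarith
  have hps : t ^ (p - 1) = t ^ p / t := Real.rpow_sub_one htne p
  rw [hode', hps]
  field_simp
  ring
end
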